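/- Under the coaction formulas of Example 4.10 (specialization C = 1): the map δ̄ defined on generators by δ̄(y⁺₁) = −q(q−q⁻¹)K̃⁻¹x̃⁺₀ ⊗ 1 + K̃⁻¹ ⊗ y⁺₁ and δ̄(y⁺₀) = −q⁻¹(q−q⁻¹)x̃⁻₁ ⊗ 1 + K̃ ⊗ y⁺₀ is compatible with the q-Serre relation in the first argument: i.e., in the tensor product algebra (U'_q^{Dr,▷,+}/_{C=1}) ⊗ U_q^{T,+}, the elements A = δ̄(y⁺₀) and B = δ̄(y⁺₁) satisfy A³B − [3]_q A²BA + [3]_q ABA² − BA³ = 0, given that the components satisfy: x̃⁻₁, x̃⁺₀, K̃ satisfy K̃x̃⁺₀K̃⁻¹ = q²x̃⁺₀, K̃x̃⁻₁K̃⁻¹ = q⁻²x̃⁻₁, the respective cubic Serre-type relations among themselves, [x̃⁺₀, x̃⁻₁] = K̃ψ₁-type relation, and y⁺₀, y⁺₁ satisfy the q-Serre relations. -/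
import Mathlib


/- STATEMENT 18: compatibility of the coaction δ̄ (at C = 1) with the q-Serre relation:
   in U ⊗ V, the elements A = δ̄(y⁺₀) = −q⁻¹(q−q⁻¹)·x̃⁻₁⊗1 + K̃⊗y⁺₀ and
   B = δ̄(y⁺₁) = −q(q−q⁻¹)·K̃⁻¹x̃⁺₀⊗1 + K̃⁻¹⊗y⁺₁ satisfy
   A³B − [3]_q A²BA + [3]_q ABA² − BA³ = 0. -/

open TensorProduct

variable {K : Type*} [Field K]
variable {U : Type*} [Ring U] [Algebra K U]
variable {V : Type*} [Ring V] [Algebra K V]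

/-- q-commutator `[x,y]_q = q·xy − q⁻¹·yx`. -/
noncomputable def qBrk {A : Type*} [Ring A] [Algebra K A] (q : K) (x y : A) : A :=
  q • (x * y) - q⁻¹ • (y * x)

/- Abstract form of the computation: if `k` is invertible and conjugates `X` by `q⁻²`
and `Y` by `q²`, `u, v` commute with `X, Y` and with `k`, and the cubic `q`-Serre
relations hold for the pair `(X, Y)` and for the pair `(u, v)`, then
`a = (s•X + u)k` and `b = k⁻¹(t•Y + v)` satisfy the cubic `q`-Serre relation. -/
set_option maxHeartbeats 1600000 in
lemma serre_key {W : Type*} [Ring W] [Algebra K W] (q s t : K) (hq : q ≠ 0)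
    (X Y u v k k' : W)
    (hkk : k * k' = 1) (hk'k : k' * k = 1)
    (hkX : k * X = (q⁻¹ ^ 2) • (X * k))
    (hkY : k * Y = (q ^ 2) • (Y * k))
    (hku : k * u = u * k) (hkv : k * v = v * k)
    (huX : u * X = X * u) (hvX : v * X = X * v)
    (huY : u * Y = Y * u) (hvY : v * Y = Y * v)
    (hS1 : X * (X * (X * Y)) - (q ^ 2 + 1 + q⁻¹ ^ 2) • (X * (X * (Y * X)))
        + (q ^ 2 + 1 + q⁻¹ ^ 2) • (X * (Y * (X * X))) - Y * (X * (X * X)) = 0)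
    (hS2 : u * (u * (u * v)) - (q ^ 2 + 1 + q⁻¹ ^ 2) • (u * (u * (v * u)))
        + (q ^ 2 + 1 + q⁻¹ ^ 2) • (u * (v * (u * u))) - v * (u * (u * u)) = 0)
    (a b : W) (ha : a = (s • X + u) * k) (hb : b = k' * (t • Y + v)) :
    a ^ 3 * b - (q ^ 2 + 1 + q⁻¹ ^ 2) • (a ^ 2 * b * a)
      + (q ^ 2 + 1 + q⁻¹ ^ 2) • (a * b * a ^ 2) - b * a ^ 3 = 0 := by
  have hq2' : q ^ 2 * q⁻¹ ^ 2 = 1 := by field_simp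
  have hq2'' : q⁻¹ ^ 2 * q ^ 2 = 1 := by field_simp
  have hXk : X * k = (q ^ 2) • (k * X) := by
    rw [hkX, smul_smul, hq2', one_smul]
  have hYk : Y * k = (q⁻¹ ^ 2) • (k * Y) := by
    rw [hkY, smul_smul, hq2'', one_smul]
  have hk'X : k' * X = (q ^ 2) • (X * k') := by
    calc k' * X = k' * (X * (k * k')) := by rw [hkk, mul_one]
    _ = k' * ((X * k) * k') := by rw [mul_assoc]
    _ = k' * (((q ^ 2) • (k * X)) * k') := by rw [hXk]
    _ = (q ^ 2) • ((k' * k) * (X * k')) := by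
        simp only [smul_mul_assoc, mul_smul_comm, mul_assoc]
    _ = (q ^ 2) • (X * k') := by rw [hk'k, one_mul]
  have hk'Y : k' * Y = (q⁻¹ ^ 2) • (Y * k') := by
    calc k' * Y = k' * (Y * (k * k')) := by rw [hkk, mul_one]
    _ = k' * ((Y * k) * k') := by rw [mul_assoc]
    _ = k' * (((q⁻¹ ^ 2) • (k * Y)) * k') := by rw [hYk]
    _ = (q⁻¹ ^ 2) • ((k' * k) * (Y * k')) := by
        simp only [smul_mul_assoc, mul_smul_comm, mul_assoc]
    _ = (q⁻¹ ^ 2) • (Y * k') := by rw [hk'k, one_mul]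
  have hk'u : k' * u = u * k' := by
    calc k' * u = k' * (u * (k * k')) := by rw [hkk, mul_one]
    _ = k' * ((u * k) * k') := by rw [mul_assoc]
    _ = (k' * k) * (u * k') := by rw [← hku]; simp only [mul_assoc]
    _ = u * k' := by rw [hk'k, one_mul]
  have hk'v : k' * v = v * k' := by
    calc k' * v = k' * (v * (k * k')) := by rw [hkk, mul_one]
    _ = k' * ((v * k) * k') := by rw [mul_assoc]
    _ = (k' * k) * (v * k') := by rw [← hkv]; simp only [mul_assoc]
    _ = v * k' := by rw [hk'k, one_mul]
  -- step lemmas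
  have rkX : ∀ w : W, k * (X * w) = (q⁻¹ ^ 2) • (X * (k * w)) := fun w => by
    rw [← mul_assoc, hkX, smul_mul_assoc, mul_assoc]
  have rkY : ∀ w : W, k * (Y * w) = (q ^ 2) • (Y * (k * w)) := fun w => by
    rw [← mul_assoc, hkY, smul_mul_assoc, mul_assoc]
  have rku : ∀ w : W, k * (u * w) = u * (k * w) := fun w => by
    rw [← mul_assoc, hku, mul_assoc]
  have rkv : ∀ w : W, k * (v * w) = v * (k * w) := fun w => by
    rw [← mul_assoc, hkv, mul_assoc]
  have rk'X : ∀ w : W, k' * (X * w) = (q ^ 2) • (X * (k' * w)) := fun w => by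
    rw [← mul_assoc, hk'X, smul_mul_assoc, mul_assoc]
  have rk'Y : ∀ w : W, k' * (Y * w) = (q⁻¹ ^ 2) • (Y * (k' * w)) := fun w => by
    rw [← mul_assoc, hk'Y, smul_mul_assoc, mul_assoc]
  have rk'u : ∀ w : W, k' * (u * w) = u * (k' * w) := fun w => by
    rw [← mul_assoc, hk'u, mul_assoc]
  have rk'v : ∀ w : W, k' * (v * w) = v * (k' * w) := fun w => by
    rw [← mul_assoc, hk'v, mul_assoc]
  have rkk' : ∀ w : W, k * (k' * w) = w := fun w => by
    rw [← mul_assoc, hkk, one_mul]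
  have rk'k : ∀ w : W, k' * (k * w) = w := fun w => by
    rw [← mul_assoc, hk'k, one_mul]
  have ruX : ∀ w : W, u * (X * w) = X * (u * w) := fun w => by
    rw [← mul_assoc, huX, mul_assoc]
  have ruY : ∀ w : W, u * (Y * w) = Y * (u * w) := fun w => by
    rw [← mul_assoc, huY, mul_assoc]
  have rvX : ∀ w : W, v * (X * w) = X * (v * w) := fun w => by
    rw [← mul_assoc, hvX, mul_assoc]
  have rvY : ∀ w : W, v * (Y * w) = Y * (v * w) := fun w => by
    rw [← mul_assoc, hvY, mul_assoc]
  have main : a ^ 3 * b - (q ^ 2 + 1 + q⁻¹ ^ 2) • (a ^ 2 * b * a)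
      + (q ^ 2 + 1 + q⁻¹ ^ 2) • (a * b * a ^ 2) - b * a ^ 3
      = ((s * s * s * t * q⁻¹ ^ 2) •
          (X * (X * (X * Y)) - (q ^ 2 + 1 + q⁻¹ ^ 2) • (X * (X * (Y * X)))
            + (q ^ 2 + 1 + q⁻¹ ^ 2) • (X * (Y * (X * X))) - Y * (X * (X * X)))
         + (u * (u * (u * v)) - (q ^ 2 + 1 + q⁻¹ ^ 2) • (u * (u * (v * u)))
            + (q ^ 2 + 1 + q⁻¹ ^ 2) • (u * (v * (u * u))) - v * (u * (u * u)))) * (k * k) := by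
    subst ha hb
    simp only [pow_succ, pow_zero, one_mul, mul_add, add_mul, smul_add, smul_sub, sub_mul,
      mul_sub, smul_mul_assoc, mul_smul_comm, smul_smul, mul_assoc, rkX, rkY, rku, rkv,
      rk'X, rk'Y, rk'u, rk'v, rkk', rk'k, hkk, hk'k, hkX, hkY, hku, hkv, hk'X, hk'Y,
      hk'u, hk'v, huX, hvX, huY, hvY, ruX, ruY, rvX, rvY, mul_one]
    match_scalars <;> ((try field_simp); (try ring))
    all_goals field_simp
    all_goals ring
  rw [main, hS1, hS2, smul_zero, zero_add, zero_mul]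

theorem coaction_serre_compatible
    (q : K) (hq : q ≠ 0) (hq2 : q ^ 2 ≠ 1)
    -- data in U : the Drinfeld currents at C = 1
    (x0 xm1 Kt Kinv psi1 phi1 : U)
    (hK1 : Kt * Kinv = 1) (hK2 : Kinv * Kt = 1)
    (hconj0 : Kt * x0 * Kinv = (q ^ 2) • x0)
    (hconj1 : Kt * xm1 * Kinv = (q⁻¹ ^ 2) • xm1)
    (hphi : phi1 = 0)
    (hcomm : x0 * xm1 - xm1 * x0 = (q - q⁻¹)⁻¹ • (psi1 - phi1))
    (hpsiK : psi1 * Kt = Kt * psi1)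
    -- level-zero q-Serre relations for E₀ := x̃⁻₁K̃⁻¹ and E₁ := x̃⁺₀
    (hSerre01 : (xm1 * Kinv) * qBrk (K := K) q⁻¹ (xm1 * Kinv) (qBrk (K := K) q (xm1 * Kinv) x0)
        - qBrk (K := K) q⁻¹ (xm1 * Kinv) (qBrk (K := K) q (xm1 * Kinv) x0) * (xm1 * Kinv) = 0)
    (hSerre10 : x0 * qBrk (K := K) q⁻¹ x0 (qBrk (K := K) q x0 (xm1 * Kinv))
        - qBrk (K := K) q⁻¹ x0 (qBrk (K := K) q x0 (xm1 * Kinv)) * x0 = 0)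
    -- data in V : the equitable generators with their q-Serre relations
    (y0 y1 : V)
    (hVSerre01 : y0 ^ 3 * y1 - (q ^ 2 + 1 + q⁻¹ ^ 2) • (y0 ^ 2 * y1 * y0)
        + (q ^ 2 + 1 + q⁻¹ ^ 2) • (y0 * y1 * y0 ^ 2) - y1 * y0 ^ 3 = 0)
    (hVSerre10 : y1 ^ 3 * y0 - (q ^ 2 + 1 + q⁻¹ ^ 2) • (y1 ^ 2 * y0 * y1)
        + (q ^ 2 + 1 + q⁻¹ ^ 2) • (y1 * y0 * y1 ^ 2) - y0 * y1 ^ 3 = 0)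
    -- the coaction images
    (a b : U ⊗[K] V)
    (ha : a = (-(q⁻¹ * (q - q⁻¹))) • (xm1 ⊗ₜ[K] (1 : V)) + Kt ⊗ₜ[K] y0)
    (hb : b = (-(q * (q - q⁻¹))) • ((Kinv * x0) ⊗ₜ[K] (1 : V)) + Kinv ⊗ₜ[K] y1) :
    a ^ 3 * b - (q ^ 2 + 1 + q⁻¹ ^ 2) • (a ^ 2 * b * a)
      + (q ^ 2 + 1 + q⁻¹ ^ 2) • (a * b * a ^ 2) - b * a ^ 3 = 0 := by
  -- U-side Serre relation in plain form
  have serreU : (xm1 * Kinv) * ((xm1 * Kinv) * ((xm1 * Kinv) * x0))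
      - (q ^ 2 + 1 + q⁻¹ ^ 2) • ((xm1 * Kinv) * ((xm1 * Kinv) * (x0 * (xm1 * Kinv))))
      + (q ^ 2 + 1 + q⁻¹ ^ 2) • ((xm1 * Kinv) * (x0 * ((xm1 * Kinv) * (xm1 * Kinv))))
      - x0 * ((xm1 * Kinv) * ((xm1 * Kinv) * (xm1 * Kinv))) = 0 := by
    rw [← hSerre01]
    simp only [qBrk, mul_sub, sub_mul, smul_sub, mul_smul_comm, smul_mul_assoc, smul_smul,
      mul_assoc, inv_inv]
    match_scalars <;> ((try field_simp); (try ring))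
    all_goals field_simp
    all_goals ring
  -- V-side Serre relation in plain form
  have serreV : y0 * (y0 * (y0 * y1)) - (q ^ 2 + 1 + q⁻¹ ^ 2) • (y0 * (y0 * (y1 * y0)))
      + (q ^ 2 + 1 + q⁻¹ ^ 2) • (y0 * (y1 * (y0 * y0))) - y1 * (y0 * (y0 * y0)) = 0 := by
    rw [← hVSerre01]
    simp only [pow_succ, pow_zero, one_mul, mul_assoc]
  -- conjugation relations in U
  have hxm : xm1 * Kinv * Kt = xm1 := by rw [mul_assoc, hK2, mul_one]
  have hUkE : Kt * (xm1 * Kinv) = (q⁻¹ ^ 2) • ((xm1 * Kinv) * Kt) := by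
    rw [hxm, ← mul_assoc, hconj1]
  have hUkF : Kt * x0 = (q ^ 2) • (x0 * Kt) := by
    have h1 : Kt * x0 * (Kinv * Kt) = Kt * x0 := by rw [hK2, mul_one]
    rw [← h1, ← mul_assoc, hconj0, smul_mul_assoc]
  -- now apply the abstract lemma
  refine serre_key q (-(q⁻¹ * (q - q⁻¹))) (-(q * (q - q⁻¹))) hq
    ((xm1 * Kinv) ⊗ₜ[K] (1 : V)) (x0 ⊗ₜ[K] (1 : V)) ((1 : U) ⊗ₜ[K] y0) ((1 : U) ⊗ₜ[K] y1)
    (Kt ⊗ₜ[K] (1 : V)) (Kinv ⊗ₜ[K] (1 : V)) ?_ ?_ ?_ ?_ ?_ ?_ ?_ ?_ ?_ ?_ ?_ ?_ a b ?_ ?_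
  · simp [Algebra.TensorProduct.tmul_mul_tmul, hK1, Algebra.TensorProduct.one_def]
  · simp [Algebra.TensorProduct.tmul_mul_tmul, hK2, Algebra.TensorProduct.one_def]
  · simp [Algebra.TensorProduct.tmul_mul_tmul, hUkE, TensorProduct.smul_tmul']
  · simp [Algebra.TensorProduct.tmul_mul_tmul, hUkF, TensorProduct.smul_tmul']
  · simp [Algebra.TensorProduct.tmul_mul_tmul]
  · simp [Algebra.TensorProduct.tmul_mul_tmul]
  · simp [Algebra.TensorProduct.tmul_mul_tmul]
  · simp [Algebra.TensorProduct.tmul_mul_tmul]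
  · simp [Algebra.TensorProduct.tmul_mul_tmul]
  · simp [Algebra.TensorProduct.tmul_mul_tmul]
  · -- hS1
    have h := congrArg (fun z : U => z ⊗ₜ[K] (1 : V)) serreU
    simp only [TensorProduct.zero_tmul, TensorProduct.sub_tmul, TensorProduct.add_tmul,
      TensorProduct.smul_tmul'] at h
    rw [← h]
    simp [Algebra.TensorProduct.tmul_mul_tmul, TensorProduct.smul_tmul']
  · -- hS2
    have h := congrArg (fun z : V => (1 : U) ⊗ₜ[K] z) serreV
    simp only [TensorProduct.tmul_zero, TensorProduct.tmul_sub, TensorProduct.tmul_add,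
      TensorProduct.tmul_smul] at h
    rw [← h]
    simp [Algebra.TensorProduct.tmul_mul_tmul]
  · -- a
    rw [ha]
    simp only [add_mul, smul_mul_assoc, Algebra.TensorProduct.tmul_mul_tmul, hxm, mul_one,
      one_mul, TensorProduct.smul_tmul']
  · -- b
    rw [hb]
    simp only [mul_add, mul_smul_comm, Algebra.TensorProduct.tmul_mul_tmul, mul_one,
      one_mul, TensorProduct.smul_tmul']
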